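/- arXiv:0905.0008 — 2 statements merged into one kernel-verified Lean document; each statement's English description precedes it below -/
import Mathlib

section
/- Exchanging two adjacent components in the ordering changes the based linking warping degree as follows: let σ be a permutation of Fin r, let a and b be the components occupying positions k and k+1 in the ordering given by σ, and let σ' be the permutation obtained from σ by exchanging the positions of a and b. Then ld_{σ'} = ld_σ − m a b + m b a. -/
/-- A Gauss word on `n` labels: each label occurs exactly twice,
once with flag `true` (over-passage) and once with flag `false` (under-passage). -/
def IsGaussWord {n : ℕ} (W : List (Fin n × Bool)) : Prop :=
  ∀ i : Fin n, W.count (i, true) = 1 ∧ W.count (i, false) = 1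

/-- Based warping degree: the number of labels whose first occurrence carries flag `false`. -/
def basedWd {n : ℕ} (W : List (Fin n × Bool)) : ℕ :=
  (Finset.univ.filter fun i : Fin n =>
    W.idxOf (i, false) < W.idxOf (i, true)).card

/-- Warping degree of a Gauss word: minimum of the based warping degree
over all cyclic rotations. -/
noncomputable def wd {n : ℕ} (W : List (Fin n × Bool)) : ℕ :=
  sInf {v | ∃ k : ℕ, v = basedWd (W.rotate k)}

/-- A Gauss word is alternating if the flags of consecutive entries alternate. -/
def IsAlternating {n : ℕ} (W : List (Fin n × Bool)) : Prop :=
  W.Chain' fun x y => y.2 = !x.2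

/-- Based linking warping degree for the ordering given by `σ`
(component `i` precedes `j` when `σ i < σ j`). -/
def ldSigma {r : ℕ} (m : Fin r → Fin r → ℕ) (σ : Equiv.Perm (Fin r)) : ℕ :=
  ∑ p ∈ Finset.univ.filter (fun p : Fin r × Fin r => σ p.1 < σ p.2), m p.1 p.2

/-- Linking warping degree: minimum over all orderings. -/
noncomputable def linkLd {r : ℕ} (m : Fin r → Fin r → ℕ) : ℕ :=
  sInf {v | ∃ σ : Equiv.Perm (Fin r), v = ldSigma m σ}

/-- Linking crossing number: number of non-self crossings. -/
def lcNum {r : ℕ} (m : Fin r → Fin r → ℕ) : ℕ :=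
  ∑ p ∈ Finset.univ.filter (fun p : Fin r × Fin r => p.1 ≠ p.2), m p.1 p.2

/-- Warping degree of an ordered link diagram: minimum over all orderings `σ`
and all choices of cyclic rotations (base points) of the components. -/
noncomputable def linkWd {r : ℕ} {n : Fin r → ℕ} (W : ∀ i, List (Fin (n i) × Bool))
    (m : Fin r → Fin r → ℕ) : ℕ :=
  sInf {v | ∃ (σ : Equiv.Perm (Fin r)) (k : Fin r → ℕ),
    v = (∑ i, basedWd ((W i).rotate (k i))) + ldSigma m σ}

/-- Crossing number of the link diagram. -/
def crossingNum {r : ℕ} (n : Fin r → ℕ) (m : Fin r → Fin r → ℕ) : ℕ :=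
  (∑ i, n i) + ∑ p ∈ Finset.univ.filter (fun p : Fin r × Fin r => p.1 < p.2),
    (m p.1 p.2 + m p.2 p.1)

/-- The number of components having at least one self-crossing. -/
def srNum {r : ℕ} (n : Fin r → ℕ) : ℕ :=
  (Finset.univ.filter fun i : Fin r => 1 ≤ n i).card

/-- Property C: every component word is alternating and, for each pair of distinct
components, the number of over-crossings equals the number of under-crossings. -/
def PropertyC {r : ℕ} {n : Fin r → ℕ} (W : ∀ i, List (Fin (n i) × Bool))
    (m : Fin r → Fin r → ℕ) : Prop :=
  (∀ i, IsAlternating (W i)) ∧ ∀ i j : Fin r, i ≠ j → m i j = m j i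

/-- exchanging two adjacent components `a` (position `k`) and `b`
(position `k+1`) in the ordering changes the based linking warping degree by
`- m a b + m b a`. -/
theorem ldSigma_swap_adjacent (r : ℕ) (m : Fin r → Fin r → ℕ)
    (hm : ∀ i, m i i = 0) (σ : Equiv.Perm (Fin r))
    (k : ℕ) (hk : k + 1 < r) (a b : Fin r)
    (ha : σ a = ⟨k, Nat.lt_of_succ_lt hk⟩) (hb : σ b = ⟨k + 1, hk⟩) :
    (ldSigma m (σ.trans (Equiv.swap ⟨k, Nat.lt_of_succ_lt hk⟩ ⟨k + 1, hk⟩)) : ℤ) =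
      (ldSigma m σ : ℤ) - m a b + m b a := by
  classical
  set K : Fin r := ⟨k, Nat.lt_of_succ_lt hk⟩ with hK
  set K' : Fin r := ⟨k + 1, hk⟩ with hK'
  have hKK' : K < K' := Fin.mk_lt_mk.mpr (Nat.lt_succ_self k)
  have hab : a ≠ b := by
    intro h
    rw [h, hb] at ha
    exact Nat.succ_ne_self k (congrArg Fin.val ha)
  have key : ∀ u v : Fin r, (u = K → v ≠ K') → (u = K' → v ≠ K) →
      (Equiv.swap K K' u < Equiv.swap K K' v ↔ u < v) := by
    intro u v h1 h2
    have hKv : K.1 = k := rfl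
    have hK'v : K'.1 = k + 1 := rfl
    rcases eq_or_ne u K with rfl | hu
    · rw [Equiv.swap_apply_left]
      rcases eq_or_ne v K with rfl | hv
      · rw [Equiv.swap_apply_left]
        simp only [lt_self_iff_false]
      · rw [Equiv.swap_apply_of_ne_of_ne hv (h1 rfl)]
        have e1 : v.1 ≠ k := fun h => hv (Fin.ext (h.trans hKv.symm))
        have e2 : v.1 ≠ k + 1 := fun h => (h1 rfl) (Fin.ext (h.trans hK'v.symm))
        simp only [Fin.lt_def, hKv, hK'v]
        omega
    · rcases eq_or_ne u K' with rfl | hu'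
      · rw [Equiv.swap_apply_right]
        rcases eq_or_ne v K' with rfl | hv'
        · rw [Equiv.swap_apply_right]
          simp only [lt_self_iff_false]
        · rw [Equiv.swap_apply_of_ne_of_ne (h2 rfl) hv']
          have e1 : v.1 ≠ k := fun h => (h2 rfl) (Fin.ext (h.trans hKv.symm))
          have e2 : v.1 ≠ k + 1 := fun h => hv' (Fin.ext (h.trans hK'v.symm))
          simp only [Fin.lt_def, hKv, hK'v]
          omega
      · rw [Equiv.swap_apply_of_ne_of_ne hu hu']
        have e1 : u.1 ≠ k := fun h => hu (Fin.ext (h.trans hKv.symm))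
        have e2 : u.1 ≠ k + 1 := fun h => hu' (Fin.ext (h.trans hK'v.symm))
        rcases eq_or_ne v K with rfl | hv
        · rw [Equiv.swap_apply_left]
          simp only [Fin.lt_def, hKv, hK'v]
          omega
        · rcases eq_or_ne v K' with rfl | hv'
          · rw [Equiv.swap_apply_right]
            simp only [Fin.lt_def, hKv, hK'v]
            omega
          · rw [Equiv.swap_apply_of_ne_of_ne hv hv']
  set S : Finset (Fin r × Fin r) :=
    Finset.univ.filter fun p : Fin r × Fin r => σ p.1 < σ p.2 with hS
  have hSins : (Finset.univ.filter fun p : Fin r × Fin r =>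
        (σ.trans (Equiv.swap K K')) p.1 < (σ.trans (Equiv.swap K K')) p.2)
      = insert (b, a) (S.erase (a, b)) := by
    ext p
    rw [Finset.mem_filter]
    simp only [Finset.mem_filter, Finset.mem_univ, true_and, Finset.mem_insert,
      Finset.mem_erase, hS, Equiv.trans_apply]
    by_cases hba : p = (b, a)
    · subst hba
      simp only [ha, hb, Equiv.swap_apply_left, Equiv.swap_apply_right]
      constructor
      · intro _; exact Or.inl trivial
      · intro _; exact hKK'
    · by_cases habp : p = (a, b)
      · subst habp
        simp only [ha, hb, Equiv.swap_apply_left, Equiv.swap_apply_right]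
        constructor
        · intro h; exact absurd h (not_lt.mpr hKK'.le)
        · rintro (h | ⟨h, _⟩)
          · exact absurd (congrArg Prod.fst h) hab
          · exact absurd rfl h
      · have h1 : σ p.1 = K → σ p.2 ≠ K' := by
          intro hp1 hp2
          have e1 : p.1 = a := σ.injective (by rw [hp1, ha])
          have e2 : p.2 = b := σ.injective (by rw [hp2, hb])
          exact habp (Prod.ext e1 e2)
        have h2 : σ p.1 = K' → σ p.2 ≠ K := by
          intro hp1 hp2
          have e1 : p.1 = b := σ.injective (by rw [hp1, hb])
          have e2 : p.2 = a := σ.injective (by rw [hp2, ha])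
          exact hba (Prod.ext e1 e2)
        rw [key _ _ h1 h2]
        constructor
        · intro h; exact Or.inr ⟨habp, h⟩
        · rintro (h | ⟨_, h⟩)
          · exact absurd h hba
          · exact h
  have hmemab : (a, b) ∈ S := by
    refine Finset.mem_filter.mpr ⟨Finset.mem_univ _, ?_⟩
    rw [ha, hb]; exact hKK'
  have hnotba : (b, a) ∉ S.erase (a, b) := by
    intro h
    have h2 := (Finset.mem_filter.mp (Finset.mem_erase.mp h).2).2
    rw [ha, hb] at h2
    exact absurd h2 (not_lt.mpr hKK'.le)
  have e1 : ldSigma m (σ.trans (Equiv.swap K K'))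
      = m b a + ∑ p ∈ S.erase (a, b), m p.1 p.2 := by
    rw [ldSigma, hSins, Finset.sum_insert hnotba]
  have e2 : ldSigma m σ = m a b + ∑ p ∈ S.erase (a, b), m p.1 p.2 := by
    rw [ldSigma, ← hS, ← Finset.add_sum_erase S _ hmemab]
  rw [e1, e2]
  push_cast
  ring
end

section
/- If the equality 2·ld = lc holds, then the based linking warping degree is the same for every ordering: ld_σ = ld for every permutation σ of Fin r. -/
/-- if `2·ld = lc` then `ld_σ = ld` for every ordering `σ`. -/
theorem ldSigma_constant_of_two_ld_eq_lc (r : ℕ) (m : Fin r → Fin r → ℕ)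
    (hm : ∀ i, m i i = 0) (h : 2 * linkLd m = lcNum m)
    (σ : Equiv.Perm (Fin r)) :
    ldSigma m σ = linkLd m := by
  have key : ∀ τ : Equiv.Perm (Fin r),
      ldSigma m τ + ldSigma m (τ.trans Fin.revPerm) = lcNum m := by
    intro τ
    unfold ldSigma lcNum
    rw [Finset.sum_filter, Finset.sum_filter, Finset.sum_filter,
      ← Finset.sum_add_distrib]
    apply Finset.sum_congr rfl
    intro p _
    simp only [Equiv.trans_apply, Fin.revPerm_apply, Fin.rev_lt_rev]
    rcases lt_trichotomy (τ p.1) (τ p.2) with h1 | h1 | h1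
    · have hne : p.1 ≠ p.2 := fun e => absurd (congrArg τ e) (ne_of_lt h1)
      simp [h1, not_lt.2 h1.le, hne]
    · have he : p.1 = p.2 := τ.injective h1
      simp [h1, he, hm]
    · have hne : p.1 ≠ p.2 := fun e => absurd (congrArg τ e) (ne_of_gt h1)
      simp [h1, not_lt.2 h1.le, hne]
  have hle : ∀ τ : Equiv.Perm (Fin r), linkLd m ≤ ldSigma m τ := fun τ =>
    Nat.sInf_le ⟨τ, rfl⟩
  have h1 := hle σ
  have h2 := hle (σ.trans Fin.revPerm)
  have h3 := key σ
  omega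
end
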